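/- Let (g_1,f_1,λ_1) and (g_2,f_2,λ_2) be spectral triples of T, with 1<p,q<∞. Then for any ε>0, P(Tf_1 − ε Tf_2) ≤ P(Tf_1 − ε^{(p-1)/(q-1)} (λ_2/λ_1)^{1/(q-1)} Tf_2). -/

import Mathlib

open MeasureTheory Set

/-- The Hardy-type operator `(Tf)(x) = v(x) ∫_a^x f(t) u(t) dt`. -/
noncomputable def hardyT (u v : ℝ → ℝ) (a : ℝ) (f : ℝ → ℝ) : ℝ → ℝ :=
  fun x => v x * ∫ t in a..x, f t * u t

/-- The adjoint-type operator `(T*f)(x) = u(x) ∫_x^b v(y) f(y) dy`. -/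
noncomputable def hardyTstar (u v : ℝ → ℝ) (b : ℝ) (f : ℝ → ℝ) : ℝ → ℝ :=
  fun x => u x * ∫ t in x..b, v t * f t

/-- `t_{(p)} = |t|^{p-1} sgn t`. -/
noncomputable def powSgn (p t : ℝ) : ℝ := |t| ^ (p - 1) * Real.sign t

/-- The `L_p` norm of a function on `[a,b]`. -/
noncomputable def funLpNorm (p a b : ℝ) (f : ℝ → ℝ) : ℝ :=
  (∫ t in a..b, |f t| ^ p) ^ (1 / p)

/-- A spectral triple `(g, f, λ)` : `g = Tf`, `f_{(p)} = λ T*(g_{(q)})` and `‖f‖_p = 1`. -/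
def IsSpectralTriple (u v : ℝ → ℝ) (a b p q : ℝ) (g f : ℝ → ℝ) (lam : ℝ) : Prop :=
  (∀ x ∈ Set.Icc a b, g x = hardyT u v a f x) ∧
  (∀ x ∈ Set.Icc a b, powSgn p (f x) = lam * hardyTstar u v b (fun y => powSgn q (g y)) x) ∧
  funLpNorm p a b f = 1

/-- `Z(g)`: the number of distinct zeros of `g` in the open interval `(a,b)`. -/
noncomputable def numZeros (a b : ℝ) (g : ℝ → ℝ) : ℕ∞ :=
  {x ∈ Set.Ioo a b | g x = 0}.encard

/-- `P(f)`: the number of sign changes of `f` in the open interval `(a,b)`. -/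
noncomputable def numSignChanges (a b : ℝ) (f : ℝ → ℝ) : ℕ∞ :=
  ⨆ n ∈ {n : ℕ | ∃ x : Fin (n + 1) → ℝ, StrictMono x ∧ (∀ i, x i ∈ Set.Ioo a b) ∧
      ∀ i : Fin n, f (x i.castSucc) * f (x i.succ) < 0}, (n : ℕ∞)

/-- The set `sp_n(T,p,q)` of spectral numbers whose spectral function has `n` zeros. -/
def spSet (u v : ℝ → ℝ) (a b p q : ℝ) (n : ℕ) : Set ℝ :=
  {lam | ∃ g f, IsSpectralTriple u v a b p q g f lam ∧ numZeros a b g = (n : ℕ∞)}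

/-- The Kolmogorov width `d_n(T)`. -/
noncomputable def kolmogorovWidth (u v : ℝ → ℝ) (a b p q : ℝ) (n : ℕ) : ℝ :=
  ⨅ φ : Fin n → (ℝ → ℝ), ⨆ f ∈ {f : ℝ → ℝ | funLpNorm p a b f ≤ 1},
    ⨅ c : Fin n → ℝ, funLpNorm q a b (fun x => hardyT u v a f x - ∑ i, c i * φ i x)

/-- The Bernstein width `b_n(T)`. -/
noncomputable def bernsteinWidth (u v : ℝ → ℝ) (a b p q : ℝ) (n : ℕ) : ℝ :=
  ⨆ φ ∈ {φ : Fin (n + 1) → (ℝ → ℝ) |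
      LinearIndependent ℝ (fun i => hardyT u v a (φ i))},
    ⨅ c ∈ {c : Fin (n + 1) → ℝ | c ≠ 0},
      funLpNorm q a b (hardyT u v a (fun x => ∑ i, c i * φ i x)) /
        funLpNorm p a b (fun x => ∑ i, c i * φ i x)

/-- The approximation number `a_n(T)`: distance to linear maps of rank at most `n-1`. -/
noncomputable def approxNumber (u v : ℝ → ℝ) (a b p q : ℝ) (n : ℕ) : ℝ :=
  ⨅ F ∈ {F : (ℝ → ℝ) →ₗ[ℝ] (ℝ → ℝ) |
      Module.rank ℝ (LinearMap.range F) ≤ ((n - 1 : ℕ) : Cardinal)},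
    ⨆ f ∈ {f : ℝ → ℝ | funLpNorm p a b f ≤ 1},
      funLpNorm q a b (fun x => hardyT u v a f x - F f x)

/-- The constant `c_{pq}`, with the Beta function expressed via the Gamma function. -/
noncomputable def cpq (p p' q : ℝ) : ℝ :=
  (p' ^ (1 / q) * q ^ (1 / p') * (p' + q) ^ (1 / p - 1 / q)) /
    (2 * (Real.Gamma (1 / q) * Real.Gamma (1 / p') / Real.Gamma (1 / q + 1 / p')))

section Aux
open Real

variable {p : ℝ}

lemma powSgn_zero (p : ℝ) : powSgn p 0 = 0 := by simp [powSgn]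

lemma powSgn_of_pos {t : ℝ} (ht : 0 < t) : powSgn p t = t ^ (p - 1) := by
  unfold powSgn; rw [abs_of_pos ht, Real.sign_of_pos ht, mul_one]

lemma powSgn_of_neg {t : ℝ} (ht : t < 0) : powSgn p t = -((-t) ^ (p - 1)) := by
  unfold powSgn; rw [abs_of_neg ht, Real.sign_of_neg ht]; ring

lemma powSgn_strictMono (hp : 1 < p) : StrictMono (powSgn p) := by
  have hp1 : (0:ℝ) < p - 1 := by linarith
  intro s t hst
  rcases lt_trichotomy s 0 with hs | hs | hs
  · rcases lt_trichotomy t 0 with ht | ht | ht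
    · rw [powSgn_of_neg hs, powSgn_of_neg ht]
      have h2 := Real.rpow_lt_rpow (by linarith : (0:ℝ) ≤ -t) (by linarith : -t < -s) hp1
      linarith
    · subst ht
      rw [powSgn_zero, powSgn_of_neg hs]
      have := Real.rpow_pos_of_pos (by linarith : (0:ℝ) < -s) (p - 1)
      linarith
    · rw [powSgn_of_neg hs, powSgn_of_pos ht]
      have h2 := Real.rpow_pos_of_pos (by linarith : (0:ℝ) < -s) (p - 1)
      have h3 := Real.rpow_pos_of_pos ht (p - 1)
      linarith
  · subst hs
    rw [powSgn_zero, powSgn_of_pos hst]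
    exact Real.rpow_pos_of_pos hst _
  · have ht : 0 < t := hs.trans hst
    rw [powSgn_of_pos hs, powSgn_of_pos ht]
    exact Real.rpow_lt_rpow hs.le hst hp1

lemma powSgn_pos_iff (hp : 1 < p) {t : ℝ} : 0 < powSgn p t ↔ 0 < t := by
  have h := (powSgn_strictMono hp).lt_iff_lt (a := 0) (b := t)
  rw [powSgn_zero] at h; exact h

lemma powSgn_neg_iff (hp : 1 < p) {t : ℝ} : powSgn p t < 0 ↔ t < 0 := by
  have h := (powSgn_strictMono hp).lt_iff_lt (a := t) (b := 0)
  rw [powSgn_zero] at h; exact h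

lemma powSgn_const_mul (hp : 1 < p) {c : ℝ} (hc : 0 < c) (t : ℝ) :
    powSgn p (c * t) = c ^ (p - 1) * powSgn p t := by
  rcases lt_trichotomy t 0 with ht | ht | ht
  · rw [powSgn_of_neg ht, powSgn_of_neg (mul_neg_of_pos_of_neg hc ht),
      show -(c * t) = c * (-t) by ring, Real.mul_rpow hc.le (by linarith)]
    ring
  · subst ht; rw [mul_zero, powSgn_zero, mul_zero]
  · rw [powSgn_of_pos ht, powSgn_of_pos (mul_pos hc ht), Real.mul_rpow hc.le ht.le]

lemma powSgn_powSgn (hp : 1 < p) {c : ℝ} (hcm : (p - 1) * (c - 1) = 1) (t : ℝ) :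
    powSgn c (powSgn p t) = t := by
  rcases lt_trichotomy t 0 with ht | ht | ht
  · have h2 : (0:ℝ) < (-t) ^ (p - 1) := Real.rpow_pos_of_pos (by linarith) _
    rw [powSgn_of_neg ht, powSgn_of_neg (by linarith : -(-t) ^ (p - 1) < 0), neg_neg,
      ← Real.rpow_mul (by linarith : (0:ℝ) ≤ -t), hcm, Real.rpow_one, neg_neg]
  · subst ht; rw [powSgn_zero, powSgn_zero]
  · rw [powSgn_of_pos ht, powSgn_of_pos (Real.rpow_pos_of_pos ht _),
      ← Real.rpow_mul ht.le, hcm, Real.rpow_one]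

lemma mul_powSgn_self (hp : 1 < p) (t : ℝ) : t * powSgn p t = |t| ^ p := by
  rcases lt_trichotomy t 0 with ht | ht | ht
  · rw [powSgn_of_neg ht, abs_of_neg ht,
      show p = p - 1 + 1 by ring, Real.rpow_add (by linarith : (0:ℝ) < -t), Real.rpow_one]
    ring
  · subst ht; rw [powSgn_zero, mul_zero, abs_zero, Real.zero_rpow (by linarith)]
  · rw [powSgn_of_pos ht, abs_of_pos ht,
      show p = p - 1 + 1 by ring, Real.rpow_add ht, Real.rpow_one]
    ring

lemma measurable_powSgn (hp : 1 < p) : Measurable (powSgn p) := by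
  have h1 : Measurable fun t : ℝ => |t| ^ (p - 1) :=
    ((Real.continuous_rpow_const (by linarith)).comp continuous_abs).measurable
  have h2 : Measurable Real.sign := by
    unfold Real.sign
    exact Measurable.ite measurableSet_Iio measurable_const
      (Measurable.ite measurableSet_Ioi measurable_const measurable_const)
  exact h1.mul h2

end Aux
section Aux2
lemma abs_powSgn {p : ℝ} (hp : 1 < p) (t : ℝ) : |powSgn p t| = |t| ^ (p - 1) := by
  rcases lt_trichotomy t 0 with ht | ht | ht
  · rw [powSgn_of_neg ht, abs_neg, abs_of_pos (Real.rpow_pos_of_pos (by linarith) _),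
      abs_of_neg ht]
  · subst ht; rw [powSgn_zero, abs_zero]
    exact (Real.zero_rpow (by linarith : p - 1 ≠ 0)).symm
  · rw [powSgn_of_pos ht, abs_of_pos (Real.rpow_pos_of_pos ht _), abs_of_pos ht]

lemma ennreal_conj {r s : ℝ} (hr : 0 < r) (hs : 0 < s) (hrs : 1 / r + 1 / s = 1) :
    (1 : ENNReal) / 1 = 1 / ENNReal.ofReal r + 1 / ENNReal.ofReal s := by
  have hrs' : r⁻¹ + s⁻¹ = 1 := by simpa [one_div] using hrs
  rw [one_div, one_div, one_div, inv_one, ← ENNReal.ofReal_inv_of_pos hr,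
    ← ENNReal.ofReal_inv_of_pos hs,
    ← ENNReal.ofReal_add (inv_nonneg.mpr hr.le) (inv_nonneg.mpr hs.le), hrs',
    ENNReal.ofReal_one]
end Aux2
section NSC
open MeasureTheory Set

lemma numSignChanges_le_of_exists {a b : ℝ} {F G : ℝ → ℝ}
    (h : ∀ n (x : Fin (n+1) → ℝ), StrictMono x → (∀ i, x i ∈ Set.Ioo a b) →
      (∀ i : Fin n, F (x i.castSucc) * F (x i.succ) < 0) →
      ∃ z : Fin (n+1) → ℝ, StrictMono z ∧ (∀ i, z i ∈ Set.Ioo a b) ∧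
        ∀ i : Fin n, G (z i.castSucc) * G (z i.succ) < 0) :
    numSignChanges a b F ≤ numSignChanges a b G := by
  unfold numSignChanges
  refine iSup₂_le fun n hn => ?_
  obtain ⟨x, hx1, hx2, hx3⟩ := hn
  obtain ⟨z, hz1, hz2, hz3⟩ := h n x hx1 hx2 hx3
  exact le_iSup₂ (f := fun (n : ℕ) (_ : n ∈ {n : ℕ | ∃ x : Fin (n + 1) → ℝ, StrictMono x ∧
    (∀ i, x i ∈ Set.Ioo a b) ∧ ∀ i : Fin n, G (x i.castSucc) * G (x i.succ) < 0}) => (n : ℕ∞))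
    n ⟨z, hz1, hz2, hz3⟩

lemma numSignChanges_le_of_sign {a b : ℝ} {F G : ℝ → ℝ}
    (h : ∀ x ∈ Set.Ioo a b, ∀ y ∈ Set.Ioo a b, F x * F y < 0 → G x * G y < 0) :
    numSignChanges a b F ≤ numSignChanges a b G := by
  apply numSignChanges_le_of_exists
  intro n x hx1 hx2 hx3
  exact ⟨x, hx1, hx2, fun i => h _ (hx2 _) _ (hx2 _) (hx3 i)⟩

lemma numSignChanges_congr {a b : ℝ} {F G : ℝ → ℝ}
    (h : ∀ x ∈ Set.Ioo a b, (0 < F x ↔ 0 < G x) ∧ (F x < 0 ↔ G x < 0)) :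
    numSignChanges a b F = numSignChanges a b G := by
  have key : ∀ (F G : ℝ → ℝ), (∀ x ∈ Set.Ioo a b, (0 < F x ↔ 0 < G x) ∧ (F x < 0 ↔ G x < 0)) →
      numSignChanges a b F ≤ numSignChanges a b G := by
    intro F G hFG
    apply numSignChanges_le_of_sign
    intro x hx y hy hprod
    rcases mul_neg_iff.mp hprod with ⟨h1, h2⟩ | ⟨h1, h2⟩
    · exact mul_neg_iff.mpr (Or.inl ⟨(hFG x hx).1.mp h1, (hFG y hy).2.mp h2⟩)
    · exact mul_neg_iff.mpr (Or.inr ⟨(hFG x hx).2.mp h1, (hFG y hy).1.mp h2⟩)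
  exact le_antisymm (key F G h) (key G F fun x hx => ⟨(h x hx).1.symm, (h x hx).2.symm⟩)

lemma numSignChanges_congr_eqOn {a b : ℝ} {F G : ℝ → ℝ}
    (h : ∀ x ∈ Set.Ioo a b, F x = G x) :
    numSignChanges a b F = numSignChanges a b G :=
  numSignChanges_congr fun x hx => by rw [h x hx]; exact ⟨Iff.rfl, Iff.rfl⟩

lemma exists_pos_pt {c d : ℝ} {h u : ℝ → ℝ} (hu : ∀ t ∈ Set.Ioo c d, 0 < u t)
    (hpos : 0 < ∫ t in Set.Ioc c d, h t * u t) :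
    ∃ z ∈ Set.Ioo c d, 0 < h z := by
  by_contra hcon
  push_neg at hcon
  have h0 : ∫ t in Set.Ioc c d, h t * u t ≤ 0 := by
    rw [MeasureTheory.integral_Ioc_eq_integral_Ioo]
    exact MeasureTheory.setIntegral_nonpos measurableSet_Ioo fun t ht =>
      mul_nonpos_of_nonpos_of_nonneg (hcon t ht) (hu t ht).le
  linarith

lemma exists_sign_pt {c d w : ℝ} {h u : ℝ → ℝ} (hu : ∀ t ∈ Set.Ioo c d, 0 < u t)
    (hw : 0 < (∫ t in Set.Ioc c d, h t * u t) * w) :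
    ∃ z ∈ Set.Ioo c d, 0 < h z * w := by
  rcases lt_trichotomy w 0 with hw0 | hw0 | hw0
  · have hneg : 0 < ∫ t in Set.Ioc c d, (fun t => -h t) t * u t := by
      have : (fun t => (fun t => -h t) t * u t) = fun t => -(h t * u t) := by funext t; ring
      rw [this, MeasureTheory.integral_neg]
      nlinarith
    obtain ⟨z, hz1, hz2⟩ := exists_pos_pt hu hneg
    exact ⟨z, hz1, by nlinarith⟩
  · subst hw0; simp at hw
  · have hpos : 0 < ∫ t in Set.Ioc c d, h t * u t := by nlinarith
    obtain ⟨z, hz1, hz2⟩ := exists_pos_pt hu hpos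
    exact ⟨z, hz1, by nlinarith⟩

end NSC
section Rolle
open MeasureTheory Set intervalIntegral

lemma nsc_left_primitive {a b : ℝ} {u v h F : ℝ → ℝ} (hab : a < b)
    (hu : ∀ x ∈ Set.Icc a b, 0 < u x) (hv : ∀ x ∈ Set.Icc a b, 0 < v x)
    (hint : IntegrableOn (fun t => h t * u t) (Set.Ioc a b))
    (hF : ∀ x ∈ Set.Ioo a b, F x = v x * ∫ t in a..x, h t * u t) :
    numSignChanges a b F ≤ numSignChanges a b h := by
  apply numSignChanges_le_of_exists
  intro n x hx1 hx2 hx3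
  rcases Nat.eq_zero_or_pos n with hn | hn
  · subst hn; exact ⟨x, hx1, hx2, fun i => i.elim0⟩
  set A : ℝ → ℝ := fun y => ∫ t in a..y, h t * u t with hA
  have hii : ∀ {c d : ℝ}, a ≤ c → d ≤ b → c ≤ d →
      IntervalIntegrable (fun t => h t * u t) volume c d := by
    intro c d hc hd hcd
    rw [intervalIntegrable_iff_integrableOn_Ioc_of_le hcd]
    exact hint.mono_set (Set.Ioc_subset_Ioc hc hd)
  have hAprod : ∀ i : Fin n, A (x i.castSucc) * A (x i.succ) < 0 := by
    intro i
    have h1 := hx3 i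
    rw [hF _ (hx2 _), hF _ (hx2 _)] at h1
    have hv1 := hv _ (Set.Ioo_subset_Icc_self (hx2 i.castSucc))
    have hv2 := hv _ (Set.Ioo_subset_Icc_self (hx2 i.succ))
    by_contra hc
    push_neg at hc
    nlinarith [mul_pos hv1 hv2, mul_nonneg (mul_pos hv1 hv2).le hc]
  have hAne : ∀ i, A (x i) ≠ 0 := by
    intro i
    by_cases hi : (i : ℕ) < n
    · have hpr := hAprod ⟨(i : ℕ), hi⟩
      have hxx : (⟨(i : ℕ), hi⟩ : Fin n).castSucc = i := by ext; simp
      rw [hxx] at hpr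
      intro h0; rw [h0, zero_mul] at hpr; exact lt_irrefl _ hpr
    · have hi' : (i : ℕ) = n := le_antisymm (Nat.lt_succ_iff.mp i.isLt) (le_of_not_gt hi)
      have hj : n - 1 < n := Nat.sub_lt hn one_pos
      have hpr := hAprod ⟨n - 1, hj⟩
      have hsucc : (⟨n - 1, hj⟩ : Fin n).succ = i := by
        ext; simp only [Fin.val_succ]; omega
      rw [hsucc] at hpr
      intro h0; rw [h0, mul_zero] at hpr; exact lt_irrefl _ hpr
  set prev : Fin (n + 1) → ℝ := fun i => if hi : i = 0 then a else x ((i.pred hi).castSucc)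
    with hprev
  have hprevmem : ∀ i, a ≤ prev i ∧ prev i < b := by
    intro i
    by_cases hi : i = 0
    · simp [hprev, hi, hab.le, hab]
    · simp only [hprev, dif_neg hi]
      exact ⟨(hx2 _).1.le, (hx2 _).2⟩
  have hprevlt : ∀ i, prev i < x i := by
    intro i
    by_cases hi : i = 0
    · simp only [hprev, dif_pos hi]; exact (hx2 i).1
    · simp only [hprev, dif_neg hi]
      apply hx1
      rw [Fin.lt_def]
      simp only [Fin.coe_castSucc, Fin.coe_pred]
      exact Nat.sub_lt (Nat.pos_of_ne_zero (fun hh => hi (Fin.ext hh))) one_pos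
  have hkey : ∀ i, 0 < (∫ t in Set.Ioc (prev i) (x i), h t * u t) * A (x i) := by
    intro i
    have heq : ∫ t in Set.Ioc (prev i) (x i), h t * u t = A (x i) - A (prev i) := by
      rw [← intervalIntegral.integral_of_le (hprevlt i).le, hA]
      rw [intervalIntegral.integral_interval_sub_left
        (hii le_rfl (hx2 i).2.le (le_of_lt (lt_of_le_of_lt (hprevmem i).1 (hprevlt i))))
        (hii le_rfl (hprevmem i).2.le (hprevmem i).1)]
    rw [heq]
    by_cases hi : i = 0
    · have hpa : prev i = a := by simp [hprev, hi]
      have hAa : A (prev i) = 0 := by rw [hpa, hA]; exact intervalIntegral.integral_same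
      rw [hAa, sub_zero]
      exact mul_self_pos.mpr (hAne i)
    · have hpr := hAprod (i.pred hi)
      have hc1 : (i.pred hi).succ = i := Fin.succ_pred i hi
      have hc2 : x ((i.pred hi).castSucc) = prev i := by simp [hprev, dif_neg hi]
      rw [hc1, hc2] at hpr
      nlinarith [mul_self_nonneg (A (x i))]
  have hz : ∀ i : Fin (n + 1), ∃ z, z ∈ Set.Ioo (prev i) (x i) ∧ 0 < h z * A (x i) := by
    intro i
    have husub : ∀ t ∈ Set.Ioo (prev i) (x i), 0 < u t := fun t ht =>
      hu t ⟨(hprevmem i).1.trans ht.1.le, ht.2.le.trans (hx2 i).2.le⟩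
    obtain ⟨z, hz1, hz2⟩ := exists_sign_pt husub (hkey i)
    exact ⟨z, hz1, hz2⟩
  choose z hzmem hzsign using hz
  refine ⟨z, ?_, ?_, ?_⟩
  · intro i j hij
    have h1 : z i < x i := (hzmem i).2
    have h3 : prev j < z j := (hzmem j).1
    have hj0 : j ≠ 0 := by rintro rfl; exact Fin.not_lt_zero i hij
    have h2 : x i ≤ prev j := by
      simp only [hprev, dif_neg hj0]
      apply hx1.monotone
      rw [Fin.le_def]
      simp only [Fin.coe_castSucc, Fin.coe_pred]
      exact Nat.le_sub_one_of_lt hij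
    linarith
  · intro i
    exact ⟨lt_of_le_of_lt (hprevmem i).1 (hzmem i).1, (hzmem i).2.trans (hx2 i).2⟩
  · intro i
    have hs1 := hzsign i.castSucc
    have hs2 := hzsign i.succ
    have hpr := hAprod i
    nlinarith [mul_pos hs1 hs2]

lemma nsc_right_primitive {a b : ℝ} {u v h F : ℝ → ℝ} (hab : a < b)
    (hu : ∀ x ∈ Set.Icc a b, 0 < u x) (hv : ∀ x ∈ Set.Icc a b, 0 < v x)
    (hint : IntegrableOn (fun t => u t * h t) (Set.Ioc a b))
    (hF : ∀ x ∈ Set.Ioo a b, F x = v x * ∫ t in x..b, u t * h t) :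
    numSignChanges a b F ≤ numSignChanges a b h := by
  apply numSignChanges_le_of_exists
  intro n x hx1 hx2 hx3
  rcases Nat.eq_zero_or_pos n with hn | hn
  · subst hn; exact ⟨x, hx1, hx2, fun i => i.elim0⟩
  set B : ℝ → ℝ := fun y => ∫ t in y..b, u t * h t with hB
  have hii : ∀ {c d : ℝ}, a ≤ c → d ≤ b → c ≤ d →
      IntervalIntegrable (fun t => u t * h t) volume c d := by
    intro c d hc hd hcd
    rw [intervalIntegrable_iff_integrableOn_Ioc_of_le hcd]
    exact hint.mono_set (Set.Ioc_subset_Ioc hc hd)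
  have hBprod : ∀ i : Fin n, B (x i.castSucc) * B (x i.succ) < 0 := by
    intro i
    have h1 := hx3 i
    rw [hF _ (hx2 _), hF _ (hx2 _)] at h1
    have hv1 := hv _ (Set.Ioo_subset_Icc_self (hx2 i.castSucc))
    have hv2 := hv _ (Set.Ioo_subset_Icc_self (hx2 i.succ))
    by_contra hc
    push_neg at hc
    nlinarith [mul_pos hv1 hv2, mul_nonneg (mul_pos hv1 hv2).le hc]
  have hBne : ∀ i, B (x i) ≠ 0 := by
    intro i
    by_cases hi : (i : ℕ) < n
    · have hpr := hBprod ⟨(i : ℕ), hi⟩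
      have hxx : (⟨(i : ℕ), hi⟩ : Fin n).castSucc = i := by ext; simp
      rw [hxx] at hpr
      intro h0; rw [h0, zero_mul] at hpr; exact lt_irrefl _ hpr
    · have hi' : (i : ℕ) = n := le_antisymm (Nat.lt_succ_iff.mp i.isLt) (le_of_not_gt hi)
      have hj : n - 1 < n := Nat.sub_lt hn one_pos
      have hpr := hBprod ⟨n - 1, hj⟩
      have hsucc : (⟨n - 1, hj⟩ : Fin n).succ = i := by
        ext; simp only [Fin.val_succ]; omega
      rw [hsucc] at hpr
      intro h0; rw [h0, mul_zero] at hpr; exact lt_irrefl _ hpr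
  -- `nxt i` : the next point to the right (or `b` for the last index)
  set nxt : Fin (n + 1) → ℝ := fun i => if hi : i = Fin.last n then b
    else x ((i.castPred hi).succ) with hnxt
  have hnxtmem : ∀ i, a < nxt i ∧ nxt i ≤ b := by
    intro i
    by_cases hi : i = Fin.last n
    · simp [hnxt, hi, hab, hab.le]
    · simp only [hnxt, dif_neg hi]
      exact ⟨(hx2 _).1, (hx2 _).2.le⟩
  have hnxtlt : ∀ i, x i < nxt i := by
    intro i
    by_cases hi : i = Fin.last n
    · simp only [hnxt, dif_pos hi]; exact (hx2 i).2
    · simp only [hnxt, dif_neg hi]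
      apply hx1
      rw [Fin.lt_def]
      simp
  have hkey : ∀ i, 0 < (∫ t in Set.Ioc (x i) (nxt i), u t * h t) * B (x i) := by
    intro i
    have heq : ∫ t in Set.Ioc (x i) (nxt i), u t * h t = B (x i) - B (nxt i) := by
      rw [← intervalIntegral.integral_of_le (hnxtlt i).le, hB]
      have hadd := intervalIntegral.integral_add_adjacent_intervals
        (hii (hx2 i).1.le (hnxtmem i).2 (hnxtlt i).le)
        (hii (hnxtmem i).1.le le_rfl (hnxtmem i).2)
      linarith [hadd]
    rw [heq]
    by_cases hi : i = Fin.last n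
    · have hnb : nxt i = b := by simp [hnxt, hi]
      have hBb : B (nxt i) = 0 := by rw [hnb, hB]; exact intervalIntegral.integral_same
      rw [hBb, sub_zero]
      exact mul_self_pos.mpr (hBne i)
    · have hpr := hBprod (i.castPred hi)
      have hc1 : (i.castPred hi).castSucc = i := Fin.castSucc_castPred i hi
      have hc2 : x ((i.castPred hi).succ) = nxt i := by simp [hnxt, dif_neg hi]
      rw [hc1, hc2] at hpr
      nlinarith [mul_self_nonneg (B (x i))]
  have hz : ∀ i : Fin (n + 1), ∃ z, z ∈ Set.Ioo (x i) (nxt i) ∧ 0 < h z * B (x i) := by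
    intro i
    have husub : ∀ t ∈ Set.Ioo (x i) (nxt i), 0 < u t := fun t ht =>
      hu t ⟨(hx2 i).1.le.trans ht.1.le, ht.2.le.trans (hnxtmem i).2⟩
    have hkey' : 0 < (∫ t in Set.Ioc (x i) (nxt i), h t * u t) * B (x i) := by
      have : (fun t => h t * u t) = fun t => u t * h t := by funext t; ring
      rw [this]; exact hkey i
    obtain ⟨z, hz1, hz2⟩ := exists_sign_pt husub hkey'
    exact ⟨z, hz1, hz2⟩
  choose z hzmem hzsign using hz
  refine ⟨z, ?_, ?_, ?_⟩
  · intro i j hij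
    have h1 : z i < nxt i := (hzmem i).2
    have h3 : x j < z j := (hzmem j).1
    have hi0 : i ≠ Fin.last n := by
      rintro rfl; exact absurd hij (not_lt.mpr (Fin.le_last j))
    have h2 : nxt i ≤ x j := by
      simp only [hnxt, dif_neg hi0]
      apply hx1.monotone
      rw [Fin.le_def]
      simpa using hij
    linarith
  · intro i
    exact ⟨(hx2 i).1.trans (hzmem i).1, lt_of_lt_of_le (hzmem i).2 (hnxtmem i).2⟩
  · intro i
    have hs1 := hzsign i.castSucc
    have hs2 := hzsign i.succ
    have hpr := hBprod i
    nlinarith [mul_pos hs1 hs2]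

end Rolle
section PrimitiveMeas
open MeasureTheory Set intervalIntegral

/-- Without any hypotheses on `φ`, the primitive `x ↦ ∫_a^x φ` is a.e. strongly measurable
on `[a,b]`. -/
lemma aesm_primitive_left (a b : ℝ) (φ : ℝ → ℝ) :
    AEStronglyMeasurable (fun x => ∫ t in a..x, φ t) (volume.restrict (Set.Icc a b)) := by
  rcases le_or_gt a b with hab | hab
  swap
  · rw [Set.Icc_eq_empty (not_le.mpr hab), Measure.restrict_empty]
    exact aestronglyMeasurable_zero_measure _
  set J' : ℝ → ℝ := fun x => ∫ t in Set.Ioc a x, φ t with hJ'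
  have hJeq : ∀ x, a ≤ x → (∫ t in a..x, φ t) = J' x := fun x hx =>
    intervalIntegral.integral_of_le hx
  by_cases hfull : IntegrableOn φ (Set.Ioc a b) volume
  · have hcont : ContinuousOn J' (Set.Icc a b) :=
      intervalIntegral.continuousOn_primitive ((integrableOn_Icc_iff_integrableOn_Ioc).mpr hfull)
    refine (hcont.aestronglyMeasurable measurableSet_Icc).congr ?_
    filter_upwards [ae_restrict_mem measurableSet_Icc] with x hx
    exact (hJeq x hx.1).symm
  · set T : Set ℝ := {x | IntegrableOn φ (Set.Ioc a x) volume} with hT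
    have hTlow : ∀ {x y : ℝ}, x ≤ y → y ∈ T → x ∈ T := fun {x y} hxy hy =>
      hy.mono_set (Set.Ioc_subset_Ioc le_rfl hxy)
    have haT : a ∈ T ∩ Set.Icc a b := ⟨by simp [hT], le_rfl, hab⟩
    have hbdd : BddAbove (T ∩ Set.Icc a b) := ⟨b, fun y hy => hy.2.2⟩
    set m : ℝ := sSup (T ∩ Set.Icc a b) with hm
    have ham : a ≤ m := le_csSup hbdd haT
    have hmb : m ≤ b := csSup_le ⟨a, haT⟩ fun y hy => hy.2.2
    have hltm : ∀ {x}, a ≤ x → x < m → x ∈ T := by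
      intro x hax hxm
      obtain ⟨y, hy, hxy⟩ := exists_lt_of_lt_csSup ⟨a, haT⟩ hxm
      exact hTlow hxy.le hy.1
    have hgtm : ∀ {x}, x ∈ Set.Icc a b → m < x → x ∉ T := by
      intro x hx hmx hxT
      exact absurd (le_csSup hbdd ⟨hxT, hx⟩) (not_le.mpr hmx)
    -- the set on which `J'` is continuous
    by_cases hmT : m ∈ T
    · -- note m < b necessarily (since not fully integrable), but we don't need that
      have hcont : ContinuousOn J' (Set.Icc a m) :=
        intervalIntegral.continuousOn_primitive ((integrableOn_Icc_iff_integrableOn_Ioc).mpr hmT)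
      have hmeas : AEStronglyMeasurable ((Set.Icc a m).indicator J') volume :=
        (aestronglyMeasurable_indicator_iff measurableSet_Icc).mpr
          (hcont.aestronglyMeasurable measurableSet_Icc)
      refine ((hmeas.mono_measure Measure.restrict_le_self).congr ?_)
      filter_upwards [ae_restrict_mem measurableSet_Icc] with x hx
      by_cases hxE : x ∈ Set.Icc a m
      · rw [Set.indicator_of_mem hxE, hJeq x hx.1]
      · have hxm : m < x := by
          rcases not_and_or.mp hxE with h1 | h1
          · exact absurd hx.1 h1
          · exact not_le.mp h1
        have hxT : x ∉ T := hgtm hx hxm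
        rw [Set.indicator_of_notMem hxE, hJeq x hx.1, hJ']
        exact (integral_undef hxT).symm
    · have hcont : ContinuousOn J' (Set.Ico a m) := by
        intro x hx
        obtain ⟨y, hy, hxy⟩ := exists_lt_of_lt_csSup ⟨a, haT⟩ hx.2
        have hcy : ContinuousOn J' (Set.Icc a y) :=
          intervalIntegral.continuousOn_primitive ((integrableOn_Icc_iff_integrableOn_Ioc).mpr hy.1)
        have h2 : ContinuousWithinAt J' (Set.Ico a m ∩ Set.Iio y) x :=
          (hcy x ⟨hx.1, hxy.le⟩).mono fun z hz => ⟨hz.1.1, hz.2.le⟩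
        rwa [continuousWithinAt_inter (Iio_mem_nhds hxy)] at h2
      have hmeas : AEStronglyMeasurable ((Set.Ico a m).indicator J') volume :=
        (aestronglyMeasurable_indicator_iff measurableSet_Ico).mpr
          (hcont.aestronglyMeasurable measurableSet_Ico)
      refine ((hmeas.mono_measure Measure.restrict_le_self).congr ?_)
      filter_upwards [ae_restrict_mem measurableSet_Icc] with x hx
      by_cases hxE : x ∈ Set.Ico a m
      · rw [Set.indicator_of_mem hxE, hJeq x hx.1]
      · have hxm : m ≤ x := by
          rcases not_and_or.mp hxE with h1 | h1
          · exact absurd hx.1 h1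
          · exact not_lt.mp h1
        have hxT : x ∉ T := by
          rcases eq_or_lt_of_le hxm with h1 | h1
          · rwa [← h1]
          · exact hgtm hx h1
        rw [Set.indicator_of_notMem hxE, hJeq x hx.1, hJ']
        exact (integral_undef hxT).symm

/-- Mirror version: `x ↦ ∫_x^b φ` is a.e. strongly measurable on `[a,b]`. -/
lemma aesm_primitive_right (a b : ℝ) (φ : ℝ → ℝ) :
    AEStronglyMeasurable (fun x => ∫ t in x..b, φ t) (volume.restrict (Set.Icc a b)) := by
  rcases le_or_gt a b with hab | hab
  swap
  · rw [Set.Icc_eq_empty (not_le.mpr hab), Measure.restrict_empty]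
    exact aestronglyMeasurable_zero_measure _
  set R : ℝ → ℝ := fun x => ∫ t in x..b, φ t with hR
  have hcont_of : ∀ {y : ℝ}, a ≤ y → y ≤ b → IntegrableOn φ (Set.Ioc y b) volume →
      ContinuousOn R (Set.Icc y b) := by
    intro y _ hyb hint
    have := intervalIntegral.continuousOn_primitive_interval_left
      (f := φ) (μ := volume) (a := y) (b := b)
      (by rw [Set.uIcc_of_le hyb]; exact (integrableOn_Icc_iff_integrableOn_Ioc).mpr hint)
    rwa [Set.uIcc_of_le hyb] at this
  by_cases hfull : IntegrableOn φ (Set.Ioc a b) volume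
  · exact ((hcont_of le_rfl hab hfull).mono Set.Subset.rfl).aestronglyMeasurable measurableSet_Icc
  · set T : Set ℝ := {x | IntegrableOn φ (Set.Ioc x b) volume} with hT
    have hTup : ∀ {x y : ℝ}, x ≤ y → x ∈ T → y ∈ T := fun {x y} hxy hx =>
      hx.mono_set (Set.Ioc_subset_Ioc hxy le_rfl)
    have hbT : b ∈ T ∩ Set.Icc a b := ⟨by simp [hT], hab, le_rfl⟩
    have hbdd : BddBelow (T ∩ Set.Icc a b) := ⟨a, fun y hy => hy.2.1⟩
    set m : ℝ := sInf (T ∩ Set.Icc a b) with hm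
    have ham : a ≤ m := le_csInf ⟨b, hbT⟩ fun y hy => hy.2.1
    have hmb : m ≤ b := csInf_le hbdd hbT
    have hgtm : ∀ {x}, x ≤ b → m < x → x ∈ T := by
      intro x hxb hmx
      obtain ⟨y, hy, hxy⟩ := exists_lt_of_csInf_lt ⟨b, hbT⟩ hmx
      exact hTup hxy.le hy.1
    have hltm : ∀ {x}, x ∈ Set.Icc a b → x < m → x ∉ T := by
      intro x hx hmx hxT
      exact absurd (csInf_le hbdd ⟨hxT, hx⟩) (not_le.mpr hmx)
    by_cases hmT : m ∈ T
    · have hcont : ContinuousOn R (Set.Icc m b) := hcont_of ham hmb hmT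
      have hmeas : AEStronglyMeasurable ((Set.Icc m b).indicator R) volume :=
        (aestronglyMeasurable_indicator_iff measurableSet_Icc).mpr
          (hcont.aestronglyMeasurable measurableSet_Icc)
      refine ((hmeas.mono_measure Measure.restrict_le_self).congr ?_)
      filter_upwards [ae_restrict_mem measurableSet_Icc] with x hx
      by_cases hxE : x ∈ Set.Icc m b
      · rw [Set.indicator_of_mem hxE]
      · have hxm : x < m := by
          rcases not_and_or.mp hxE with h1 | h1
          · exact not_le.mp h1
          · exact absurd hx.2 h1
        have hxT : x ∉ T := hltm hx hxm
        rw [Set.indicator_of_notMem hxE]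
        show (0:ℝ) = ∫ t in x..b, φ t
        rw [intervalIntegral.integral_of_le hx.2]
        exact (integral_undef hxT).symm
    · have hcont : ContinuousOn R (Set.Ioc m b) := by
        intro x hx
        obtain ⟨y, hy, hxy⟩ := exists_lt_of_csInf_lt ⟨b, hbT⟩ hx.1
        have hcy : ContinuousOn R (Set.Icc y b) := hcont_of hy.2.1 hy.2.2 hy.1
        have h2 : ContinuousWithinAt R (Set.Ioc m b ∩ Set.Ioi y) x :=
          (hcy x ⟨hxy.le, hx.2⟩).mono fun z hz => ⟨hz.2.le, hz.1.2⟩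
        rwa [continuousWithinAt_inter (Ioi_mem_nhds hxy)] at h2
      have hmeas : AEStronglyMeasurable ((Set.Ioc m b).indicator R) volume :=
        (aestronglyMeasurable_indicator_iff measurableSet_Ioc).mpr
          (hcont.aestronglyMeasurable measurableSet_Ioc)
      refine ((hmeas.mono_measure Measure.restrict_le_self).congr ?_)
      filter_upwards [ae_restrict_mem measurableSet_Icc] with x hx
      by_cases hxE : x ∈ Set.Ioc m b
      · rw [Set.indicator_of_mem hxE]
      · have hxm : x ≤ m := by
          rcases not_and_or.mp hxE with h1 | h1
          · exact not_lt.mp h1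
          · exact absurd hx.2 h1
        have hxT : x ∉ T := by
          rcases eq_or_lt_of_le hxm with h1 | h1
          · rwa [h1]
          · exact hltm hx h1
        rw [Set.indicator_of_notMem hxE]
        show (0:ℝ) = ∫ t in x..b, φ t
        rw [intervalIntegral.integral_of_le hx.2]
        exact (integral_undef hxT).symm

end PrimitiveMeas
section Fubini
open MeasureTheory Set

lemma fubini_triangle {a b : ℝ} {φ ψ : ℝ → ℝ}
    (hφ : IntegrableOn φ (Set.Ioc a b) volume) (hψ : IntegrableOn ψ (Set.Ioc a b) volume) :
    ∫ x in Set.Ioc a b, φ x * ∫ y in Set.Ioc x b, ψ y =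
      ∫ y in Set.Ioc a b, ψ y * ∫ x in Set.Ioc a y, φ x := by
  set μ := volume.restrict (Set.Ioc a b) with hμ
  set U : Set (ℝ × ℝ) := {z | a < z.1 ∧ z.1 < z.2 ∧ z.2 < b} with hUdef
  have hU : MeasurableSet U := by
    have : U = {z : ℝ × ℝ | a < z.1} ∩ ({z : ℝ × ℝ | z.1 < z.2} ∩ {z : ℝ × ℝ | z.2 < b}) := by
      ext z; simp [hUdef, and_assoc]
    rw [this]
    exact (measurableSet_lt measurable_const measurable_fst).inter
      ((measurableSet_lt measurable_fst measurable_snd).inter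
        (measurableSet_lt measurable_snd measurable_const))
  set F : ℝ × ℝ → ℝ := U.indicator (fun z => φ z.1 * ψ z.2) with hF
  have hFint : Integrable F (μ.prod μ) := (hφ.mul_prod hψ).indicator hU
  have huncurry : Function.uncurry (fun x y => F (x, y)) = F := rfl
  have hswap := MeasureTheory.integral_integral_swap (f := fun x y => F (x, y))
    (μ := μ) (ν := μ) (by rw [huncurry]; exact hFint)
  have hslice1 : ∀ x ∈ Set.Ioc a b,
      (∫ y, F (x, y) ∂μ) = φ x * ∫ y in Set.Ioc x b, ψ y := by
    intro x hx
    have hsl : (fun y => F (x, y)) = (Set.Ioo x b).indicator (fun y => φ x * ψ y) := by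
      funext y
      by_cases hy : y ∈ Set.Ioo x b
      · rw [Set.indicator_of_mem hy]
        exact Set.indicator_of_mem (show (x, y) ∈ U from ⟨hx.1, hy.1, hy.2⟩) _
      · rw [Set.indicator_of_notMem hy]
        refine Set.indicator_of_notMem ?_ _
        intro hmem
        exact hy ⟨hmem.2.1, hmem.2.2⟩
    have hsub : Set.Ioo x b ⊆ Set.Ioc a b := fun y hy => ⟨hx.1.trans hy.1, hy.2.le⟩
    rw [hμ, hsl, MeasureTheory.setIntegral_indicator measurableSet_Ioo,
      Set.inter_eq_self_of_subset_right hsub,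
      MeasureTheory.integral_const_mul, MeasureTheory.integral_Ioc_eq_integral_Ioo]
  have hslice2 : ∀ y ∈ Set.Ioo a b,
      (∫ x, F (x, y) ∂μ) = ψ y * ∫ x in Set.Ioc a y, φ x := by
    intro y hy
    have hsl : (fun x => F (x, y)) = (Set.Ioo a y).indicator (fun x => φ x * ψ y) := by
      funext x
      by_cases hx : x ∈ Set.Ioo a y
      · rw [Set.indicator_of_mem hx]
        exact Set.indicator_of_mem (show (x, y) ∈ U from ⟨hx.1, hx.2, hy.2⟩) _
      · rw [Set.indicator_of_notMem hx]
        refine Set.indicator_of_notMem ?_ _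
        intro hmem
        exact hx ⟨hmem.1, hmem.2.1⟩
    have hsub : Set.Ioo a y ⊆ Set.Ioc a b := fun t ht => ⟨ht.1, ht.2.le.trans hy.2.le⟩
    rw [hμ, hsl, MeasureTheory.setIntegral_indicator measurableSet_Ioo,
      Set.inter_eq_self_of_subset_right hsub,
      MeasureTheory.integral_mul_const, MeasureTheory.integral_Ioc_eq_integral_Ioo]
    ring
  calc ∫ x in Set.Ioc a b, φ x * ∫ y in Set.Ioc x b, ψ y
      = ∫ x, (∫ y, F (x, y) ∂μ) ∂μ := by
        rw [hμ]
        exact (MeasureTheory.setIntegral_congr_fun measurableSet_Ioc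
          (fun x hx => (hslice1 x hx).symm))
    _ = ∫ y, (∫ x, F (x, y) ∂μ) ∂μ := hswap
    _ = ∫ y in Set.Ioc a b, ψ y * ∫ x in Set.Ioc a y, φ x := by
        rw [hμ, MeasureTheory.integral_Ioc_eq_integral_Ioo,
          MeasureTheory.integral_Ioc_eq_integral_Ioo (f := fun y => ψ y * ∫ x in Set.Ioc a y, φ x)]
        exact MeasureTheory.setIntegral_congr_fun measurableSet_Ioo
          (fun y hy => hslice2 y hy)

end Fubini
section Triple
open MeasureTheory Set

lemma triple_props {u v : ℝ → ℝ} {a b p q p' : ℝ} (hab : a < b) (hp : 1 < p) (hq : 1 < q)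
    (hp' : 1 / p' = 1 - 1 / p)
    (hu : ∀ x ∈ Set.Icc a b, 0 < u x) (hv : ∀ x ∈ Set.Icc a b, 0 < v x)
    (hu' : MemLp u (ENNReal.ofReal p') (volume.restrict (Set.Icc a b)))
    (hv' : MemLp v (ENNReal.ofReal q) (volume.restrict (Set.Icc a b)))
    {g f : ℝ → ℝ} {lam : ℝ} (h : IsSpectralTriple u v a b p q g f lam) :
    IntegrableOn (fun t => f t * u t) (Set.Ioc a b) volume ∧
    IntegrableOn (fun t => v t * powSgn q (g t)) (Set.Ioc a b) volume ∧
    0 < lam := by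
  obtain ⟨hg_eq, hf_eq, hnorm⟩ := h
  have hg_eq' : ∀ x ∈ Set.Icc a b, g x = v x * ∫ t in a..x, f t * u t := by
    intro x hx; rw [hg_eq x hx]; rfl
  have hf_eq' : ∀ x ∈ Set.Icc a b,
      powSgn p (f x) = lam * (u x * ∫ t in x..b, v t * powSgn q (g t)) := by
    intro x hx; rw [hf_eq x hx]; rfl
  -- exponent arithmetic
  have hp0 : (0:ℝ) < p := lt_trans one_pos hp
  have hp'0 : (0:ℝ) < p' := by
    have h1 : (0:ℝ) < 1 - 1/p := by
      have : 1/p < 1 := by rw [div_lt_one hp0]; exact hp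
      linarith
    exact one_div_pos.mp (by rw [hp']; exact h1)
  have hpp' : 1/p + 1/p' = 1 := by rw [hp']; ring
  have hq0 : (0:ℝ) < q := lt_trans one_pos hq
  have hq1 : (0:ℝ) < q - 1 := by linarith
  set q' : ℝ := q / (q - 1) with hq'def
  have hq'0 : 0 < q' := div_pos hq0 hq1
  have hqq' : 1/q + 1/q' = 1 := by rw [hq'def]; field_simp; ring
  have hq'q : (q - 1) * q' = q := by rw [hq'def]; field_simp
  -- normalization
  have hle : (∫ t in a..b, |f t| ^ p) = ∫ t in Set.Ioc a b, |f t| ^ p :=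
    intervalIntegral.integral_of_le hab.le
  have hV0 : 0 ≤ ∫ t in Set.Ioc a b, |f t| ^ p :=
    setIntegral_nonneg measurableSet_Ioc fun t _ => Real.rpow_nonneg (abs_nonneg _) _
  have hnorm' : (∫ t in Set.Ioc a b, |f t| ^ p) ^ (1/p) = 1 := by
    rw [← hle]; exact hnorm
  have hV1 : (∫ t in Set.Ioc a b, |f t| ^ p) = 1 := by
    have h2 := congrArg (fun t : ℝ => t ^ p) hnorm'
    simp only [Real.one_rpow] at h2
    rwa [← Real.rpow_mul hV0, show (1/p) * p = 1 by field_simp, Real.rpow_one] at h2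
  have hVint : IntegrableOn (fun t => |f t| ^ p) (Set.Ioc a b) volume := by
    by_contra hcon
    rw [MeasureTheory.integral_undef hcon] at hV1
    norm_num at hV1
  -- measurability chain
  have hrestr : volume.restrict (Set.Ioc a b) ≤ volume.restrict (Set.Icc a b) :=
    Measure.restrict_mono Set.Ioc_subset_Icc_self le_rfl
  have hum : AEStronglyMeasurable u (volume.restrict (Set.Icc a b)) := hu'.1
  have hvm : AEStronglyMeasurable v (volume.restrict (Set.Icc a b)) := hv'.1
  have hAm := aesm_primitive_left a b (fun t => f t * u t)
  have hgm : AEStronglyMeasurable g (volume.restrict (Set.Icc a b)) := by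
    refine (hvm.mul hAm).congr ?_
    filter_upwards [ae_restrict_mem measurableSet_Icc] with x hx
    exact (hg_eq' x hx).symm
  have hGm : AEStronglyMeasurable (fun y => powSgn q (g y)) (volume.restrict (Set.Icc a b)) :=
    ((measurable_powSgn hq).comp_aemeasurable hgm.aemeasurable).aestronglyMeasurable
  have hIm := aesm_primitive_right a b (fun t => v t * powSgn q (g t))
  have hfm : AEStronglyMeasurable f (volume.restrict (Set.Icc a b)) := by
    set c : ℝ := 1 + 1/(p-1) with hc
    have hpos : (0:ℝ) < 1/(p-1) := one_div_pos.mpr (by linarith)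
    have hc1 : 1 < c := by rw [hc]; linarith
    have hcm : (p - 1) * (c - 1) = 1 := by
      have hne : p - 1 ≠ 0 := by linarith
      rw [hc]; field_simp; ring
    have hWm : AEStronglyMeasurable
        (fun x => powSgn c (lam * (u x * ∫ t in x..b, v t * powSgn q (g t))))
        (volume.restrict (Set.Icc a b)) :=
      ((measurable_powSgn hc1).comp_aemeasurable
        (aemeasurable_const.mul (hum.aemeasurable.mul hIm.aemeasurable))).aestronglyMeasurable
    refine hWm.congr ?_
    filter_upwards [ae_restrict_mem measurableSet_Icc] with x hx
    rw [← hf_eq' x hx]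
    exact powSgn_powSgn hp hcm (f x)
  -- f ∈ L^p on Ioc
  have hfm' : AEStronglyMeasurable f (volume.restrict (Set.Ioc a b)) := hfm.mono_measure hrestr
  have hfLp : MemLp f (ENNReal.ofReal p) (volume.restrict (Set.Ioc a b)) := by
    refine (memLp_norm_rpow_iff hfm' (ENNReal.ofReal_pos.mpr hp0).ne' ENNReal.ofReal_ne_top).mp ?_
    rw [ENNReal.div_self (ENNReal.ofReal_pos.mpr hp0).ne' ENNReal.ofReal_ne_top,
      memLp_one_iff_integrable]
    have hfun : (fun x => ‖f x‖ ^ (ENNReal.ofReal p).toReal) = fun t => |f t| ^ p := by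
      funext t; rw [Real.norm_eq_abs, ENNReal.toReal_ofReal hp0.le]
    rw [hfun]; exact hVint
  have huLp : MemLp u (ENNReal.ofReal p') (volume.restrict (Set.Ioc a b)) :=
    hu'.mono_measure hrestr
  have hfu : IntegrableOn (fun t => f t * u t) (Set.Ioc a b) volume := by
    have hsm := huLp.smul hfLp (r := 1) (hpqr := ⟨by simpa [one_div] using (ennreal_conj hp0 hp'0 hpp').symm⟩)
    rw [memLp_one_iff_integrable] at hsm
    have : (fun t => f t * u t) = f • u := by
      funext t; simp [Pi.smul_apply, smul_eq_mul]
    rw [this]; exact hsm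
  -- continuity and boundedness of the primitive A
  have hAc : ContinuousOn (fun y => ∫ t in a..y, f t * u t) (Set.Icc a b) := by
    have h2 := intervalIntegral.continuousOn_primitive_interval (a := a) (b := b) (μ := volume)
      (f := fun t => f t * u t)
      (by rw [Set.uIcc_of_le hab.le]; exact (integrableOn_Icc_iff_integrableOn_Ioc).mpr hfu)
    rwa [Set.uIcc_of_le hab.le] at h2
  obtain ⟨C, hC⟩ := isCompact_Icc.exists_bound_of_continuousOn hAc
  have hC0 : 0 ≤ C := (norm_nonneg _).trans (hC a ⟨le_rfl, hab.le⟩)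
  -- |g|^q is integrable
  have hvq : Integrable (fun t => |v t| ^ q) (volume.restrict (Set.Ioc a b)) := by
    have h2 := (hv'.mono_measure hrestr).norm_rpow
      (ENNReal.ofReal_pos.mpr hq0).ne' ENNReal.ofReal_ne_top
    rw [memLp_one_iff_integrable] at h2
    have hfun : (fun x => ‖v x‖ ^ (ENNReal.ofReal q).toReal) = fun t => |v t| ^ q := by
      funext t; rw [Real.norm_eq_abs, ENNReal.toReal_ofReal hq0.le]
    rwa [hfun] at h2
  have hgq : Integrable (fun t => |g t| ^ q) (volume.restrict (Set.Ioc a b)) := by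
    refine (hvq.const_mul (C ^ q)).mono' ?_ ?_
    · exact (((Real.continuous_rpow_const hq0.le).comp continuous_abs).measurable.comp_aemeasurable
        (hgm.mono_measure hrestr).aemeasurable).aestronglyMeasurable
    · filter_upwards [ae_restrict_mem measurableSet_Ioc] with t ht
      have htIcc : t ∈ Set.Icc a b := Set.Ioc_subset_Icc_self ht
      have hgb : |g t| ≤ C * |v t| := by
        rw [hg_eq' t htIcc, abs_mul]
        calc |v t| * |∫ s in a..t, f s * u s|
            ≤ |v t| * C := by
              refine mul_le_mul_of_nonneg_left ?_ (abs_nonneg _)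
              rw [← Real.norm_eq_abs]; exact hC t htIcc
          _ = C * |v t| := mul_comm _ _
      calc ‖|g t| ^ q‖ = |g t| ^ q := Real.norm_of_nonneg (Real.rpow_nonneg (abs_nonneg _) _)
        _ ≤ (C * |v t|) ^ q := Real.rpow_le_rpow (abs_nonneg _) hgb hq0.le
        _ = C ^ q * |v t| ^ q := Real.mul_rpow hC0 (abs_nonneg _)
  -- v·(g)_{(q)} is integrable
  have hGLp : MemLp (fun t => powSgn q (g t)) (ENNReal.ofReal q')
      (volume.restrict (Set.Ioc a b)) := by
    refine (memLp_norm_rpow_iff (hGm.mono_measure hrestr)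
      (ENNReal.ofReal_pos.mpr hq'0).ne' ENNReal.ofReal_ne_top).mp ?_
    rw [ENNReal.div_self (ENNReal.ofReal_pos.mpr hq'0).ne' ENNReal.ofReal_ne_top,
      memLp_one_iff_integrable]
    have hfun : (fun x => ‖powSgn q (g x)‖ ^ (ENNReal.ofReal q').toReal)
        = fun t => |g t| ^ q := by
      funext t
      rw [Real.norm_eq_abs, ENNReal.toReal_ofReal hq'0.le, abs_powSgn hq,
        ← Real.rpow_mul (abs_nonneg _), hq'q]
    rw [hfun]; exact hgq
  have hvG : IntegrableOn (fun t => v t * powSgn q (g t)) (Set.Ioc a b) volume := by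
    have hsm := hGLp.smul (hv'.mono_measure hrestr) (r := 1) (hpqr := ⟨by simpa [one_div] using (ennreal_conj hq0 hq'0 hqq').symm⟩)
    rw [memLp_one_iff_integrable] at hsm
    have : (fun t => v t * powSgn q (g t)) = v • fun t => powSgn q (g t) := by
      funext t; simp [Pi.smul_apply, smul_eq_mul]
    rw [this]; exact hsm
  -- positivity of lam via Fubini
  have key : (1:ℝ) = lam * ∫ y in Set.Ioc a b, |g y| ^ q := by
    have e1 : ∫ t in Set.Ioc a b, |f t| ^ p = ∫ t in Set.Ioc a b, f t * powSgn p (f t) :=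
      setIntegral_congr_fun measurableSet_Ioc fun t _ => (mul_powSgn_self hp (f t)).symm
    have e2 : ∫ t in Set.Ioc a b, f t * powSgn p (f t)
        = lam * ∫ x in Set.Ioc a b, (f x * u x) * ∫ y in Set.Ioc x b, v y * powSgn q (g y) := by
      rw [← MeasureTheory.integral_const_mul]
      refine setIntegral_congr_fun measurableSet_Ioc fun x hx => ?_
      rw [hf_eq' x (Set.Ioc_subset_Icc_self hx),
        intervalIntegral.integral_of_le hx.2]
      ring
    have e3 := fubini_triangle (φ := fun t => f t * u t)
      (ψ := fun t => v t * powSgn q (g t)) hfu hvG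
    have e4 : (∫ y in Set.Ioc a b, (v y * powSgn q (g y)) * ∫ x in Set.Ioc a y, f x * u x)
        = ∫ y in Set.Ioc a b, |g y| ^ q := by
      refine setIntegral_congr_fun measurableSet_Ioc fun y hy => ?_
      have hyIcc : y ∈ Set.Icc a b := Set.Ioc_subset_Icc_self hy
      calc (v y * powSgn q (g y)) * ∫ x in Set.Ioc a y, f x * u x
          = g y * powSgn q (g y) := by
            rw [hg_eq' y hyIcc, ← intervalIntegral.integral_of_le hy.1.le]
            ring
        _ = |g y| ^ q := mul_powSgn_self hq (g y)
    calc (1:ℝ) = ∫ t in Set.Ioc a b, |f t| ^ p := hV1.symm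
      _ = ∫ t in Set.Ioc a b, f t * powSgn p (f t) := e1
      _ = lam * ∫ x in Set.Ioc a b, (f x * u x) * ∫ y in Set.Ioc x b, v y * powSgn q (g y) := e2
      _ = lam * ∫ y in Set.Ioc a b, (v y * powSgn q (g y)) * ∫ x in Set.Ioc a y, f x * u x := by
          rw [e3]
      _ = lam * ∫ y in Set.Ioc a b, |g y| ^ q := by rw [e4]
  have hW0 : 0 ≤ ∫ y in Set.Ioc a b, |g y| ^ q :=
    setIntegral_nonneg measurableSet_Ioc fun y _ => Real.rpow_nonneg (abs_nonneg _) _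
  have hlam : 0 < lam := by
    rcases lt_trichotomy lam 0 with h1 | h1 | h1
    · nlinarith
    · rw [h1, zero_mul] at key; norm_num at key
    · exact h1
  exact ⟨hfu, hvG, hlam⟩

end Triple

theorem sign_changes_comparison
    (a b p q p' : ℝ) (u v : ℝ → ℝ)
    (hab : a < b) (hp : 1 < p) (hq : 1 < q)
    (hp' : 1 / p' = 1 - 1 / p)
    (hu : ∀ x ∈ Set.Icc a b, 0 < u x) (hv : ∀ x ∈ Set.Icc a b, 0 < v x)
    (hu' : MemLp u (ENNReal.ofReal p') (volume.restrict (Set.Icc a b)))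
    (hv' : MemLp v (ENNReal.ofReal q) (volume.restrict (Set.Icc a b)))
    (g₁ f₁ g₂ f₂ : ℝ → ℝ) (lam₁ lam₂ : ℝ)
    (h₁ : IsSpectralTriple u v a b p q g₁ f₁ lam₁)
    (h₂ : IsSpectralTriple u v a b p q g₂ f₂ lam₂)
    (ε : ℝ) (hε : 0 < ε) :
    numSignChanges a b
        (fun x => hardyT u v a f₁ x - ε * hardyT u v a f₂ x) ≤
      numSignChanges a b
        (fun x => hardyT u v a f₁ x -
          ε ^ ((p - 1) / (q - 1)) * (lam₂ / lam₁) ^ (1 / (q - 1)) *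
            hardyT u v a f₂ x) := by
  obtain ⟨hfu₁, hvG₁, hlam₁⟩ := triple_props hab hp hq hp' hu hv hu' hv' h₁
  obtain ⟨hfu₂, hvG₂, hlam₂⟩ := triple_props hab hp hq hp' hu hv hu' hv' h₂
  obtain ⟨hg1, hf1, -⟩ := h₁
  obtain ⟨hg2, hf2, -⟩ := h₂
  have hg1' : ∀ x ∈ Set.Icc a b, g₁ x = v x * ∫ t in a..x, f₁ t * u t := by
    intro x hx; rw [hg1 x hx]; rfl
  have hg2' : ∀ x ∈ Set.Icc a b, g₂ x = v x * ∫ t in a..x, f₂ t * u t := by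
    intro x hx; rw [hg2 x hx]; rfl
  have hf1' : ∀ x ∈ Set.Icc a b,
      powSgn p (f₁ x) = lam₁ * (u x * ∫ t in x..b, v t * powSgn q (g₁ t)) := by
    intro x hx; rw [hf1 x hx]; rfl
  have hf2' : ∀ x ∈ Set.Icc a b,
      powSgn p (f₂ x) = lam₂ * (u x * ∫ t in x..b, v t * powSgn q (g₂ t)) := by
    intro x hx; rw [hf2 x hx]; rfl
  have hq1 : (0:ℝ) < q - 1 := by linarith
  have hp1 : (0:ℝ) < p - 1 := by linarith
  have hdiv : 0 < lam₂ / lam₁ := div_pos hlam₂ hlam₁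
  set k : ℝ := ε ^ (p - 1) * (lam₂ / lam₁) with hk
  have hk0 : 0 < k := mul_pos (Real.rpow_pos_of_pos hε _) hdiv
  set c : ℝ := ε ^ ((p - 1) / (q - 1)) * (lam₂ / lam₁) ^ (1 / (q - 1)) with hc
  have hc0 : 0 < c := mul_pos (Real.rpow_pos_of_pos hε _) (Real.rpow_pos_of_pos hdiv _)
  have hck : c ^ (q - 1) = k := by
    rw [hc, Real.mul_rpow (Real.rpow_pos_of_pos hε _).le (Real.rpow_pos_of_pos hdiv _).le,
      ← Real.rpow_mul hε.le, ← Real.rpow_mul hdiv.le,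
      show (p - 1) / (q - 1) * (q - 1) = p - 1 by field_simp,
      show 1 / (q - 1) * (q - 1) = 1 by field_simp, Real.rpow_one, hk]
  have hlamk : lam₁ * k = ε ^ (p - 1) * lam₂ := by
    rw [hk]; field_simp
  -- the intermediate functions
  set h₀ : ℝ → ℝ := fun t => f₁ t - ε * f₂ t with hh₀
  set χ₁ : ℝ → ℝ := fun t => powSgn p (f₁ t) - ε ^ (p - 1) * powSgn p (f₂ t) with hχ₁
  set χ : ℝ → ℝ := fun t => powSgn q (g₁ t) - k * powSgn q (g₂ t) with hχ
  set fin : ℝ → ℝ := fun t => g₁ t - c * g₂ t with hfin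
  -- Step 1
  have step1 : numSignChanges a b (fun x => hardyT u v a f₁ x - ε * hardyT u v a f₂ x)
      ≤ numSignChanges a b h₀ := by
    refine nsc_left_primitive hab hu hv ?_ ?_
    · have hfun : (fun t => h₀ t * u t) = fun t => f₁ t * u t - ε * (f₂ t * u t) := by
        funext t; simp only [hh₀]; ring
      rw [hfun]; exact hfu₁.sub (hfu₂.const_mul ε)
    · intro x hx
      have hx' : x ∈ Set.Icc a b := Set.Ioo_subset_Icc_self hx
      have hii₁ : IntervalIntegrable (fun t => f₁ t * u t) volume a x :=
        (intervalIntegrable_iff_integrableOn_Ioc_of_le hx'.1).mpr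
          (hfu₁.mono_set (Set.Ioc_subset_Ioc le_rfl hx'.2))
      have hii₂ : IntervalIntegrable (fun t => f₂ t * u t) volume a x :=
        (intervalIntegrable_iff_integrableOn_Ioc_of_le hx'.1).mpr
          (hfu₂.mono_set (Set.Ioc_subset_Ioc le_rfl hx'.2))
      have hfun : (fun t => h₀ t * u t) = fun t => f₁ t * u t - ε * (f₂ t * u t) := by
        funext t; simp only [hh₀]; ring
      show v x * (∫ t in a..x, f₁ t * u t) - ε * (v x * ∫ t in a..x, f₂ t * u t)
        = v x * ∫ t in a..x, h₀ t * u t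
      rw [hfun, intervalIntegral.integral_sub hii₁ (hii₂.const_mul ε),
        intervalIntegral.integral_const_mul]
      ring
  -- Step 2
  have step2 : numSignChanges a b h₀ = numSignChanges a b χ₁ := by
    refine numSignChanges_congr fun x _ => ?_
    have hmono := powSgn_strictMono hp
    have heps : powSgn p (ε * f₂ x) = ε ^ (p - 1) * powSgn p (f₂ x) :=
      powSgn_const_mul hp hε _
    constructor
    · rw [sub_pos, sub_pos, ← heps]
      exact (hmono.lt_iff_lt).symm
    · rw [sub_lt_zero, sub_lt_zero, ← heps]
      exact (hmono.lt_iff_lt).symm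
  -- Step 3
  have step3 : numSignChanges a b χ₁ ≤ numSignChanges a b χ := by
    refine nsc_right_primitive (u := v) (v := fun x => lam₁ * u x) hab hv
      (fun x hx => mul_pos hlam₁ (hu x hx)) ?_ ?_
    · have hfun : (fun t => v t * χ t)
          = fun t => v t * powSgn q (g₁ t) - k * (v t * powSgn q (g₂ t)) := by
        funext t; simp only [hχ]; ring
      rw [hfun]; exact hvG₁.sub (hvG₂.const_mul k)
    · intro x hx
      have hx' : x ∈ Set.Icc a b := Set.Ioo_subset_Icc_self hx
      have hii₁ : IntervalIntegrable (fun t => v t * powSgn q (g₁ t)) volume x b :=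
        (intervalIntegrable_iff_integrableOn_Ioc_of_le hx'.2).mpr
          (hvG₁.mono_set (Set.Ioc_subset_Ioc hx'.1 le_rfl))
      have hii₂ : IntervalIntegrable (fun t => v t * powSgn q (g₂ t)) volume x b :=
        (intervalIntegrable_iff_integrableOn_Ioc_of_le hx'.2).mpr
          (hvG₂.mono_set (Set.Ioc_subset_Ioc hx'.1 le_rfl))
      have hfun : (fun t => v t * χ t)
          = fun t => v t * powSgn q (g₁ t) - k * (v t * powSgn q (g₂ t)) := by
        funext t; simp only [hχ]; ring
      show χ₁ x = (lam₁ * u x) * ∫ t in x..b, v t * χ t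
      rw [hfun, intervalIntegral.integral_sub hii₁ (hii₂.const_mul k),
        intervalIntegral.integral_const_mul, hχ₁]
      simp only
      rw [hf1' x hx', hf2' x hx']
      linear_combination (u x * ∫ t in x..b, v t * powSgn q (g₂ t)) * hlamk
  -- Step 4
  have step4 : numSignChanges a b χ = numSignChanges a b fin := by
    refine numSignChanges_congr fun x _ => ?_
    have hmono := powSgn_strictMono hq
    have hcg : powSgn q (c * g₂ x) = k * powSgn q (g₂ x) := by
      rw [powSgn_const_mul hq hc0, hck]
    constructor
    · simp only [hχ, hfin]
      rw [sub_pos, sub_pos, ← hcg]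
      exact (hmono.lt_iff_lt)
    · simp only [hχ, hfin]
      rw [sub_lt_zero, sub_lt_zero, ← hcg]
      exact (hmono.lt_iff_lt)
  -- Step 5
  have step5 : numSignChanges a b fin = numSignChanges a b
      (fun x => hardyT u v a f₁ x -
        ε ^ ((p - 1) / (q - 1)) * (lam₂ / lam₁) ^ (1 / (q - 1)) * hardyT u v a f₂ x) := by
    refine numSignChanges_congr_eqOn fun x hx => ?_
    have hx' : x ∈ Set.Icc a b := Set.Ioo_subset_Icc_self hx
    simp only [hfin, hc]
    rw [hg1 x hx', hg2 x hx']
  calc numSignChanges a b (fun x => hardyT u v a f₁ x - ε * hardyT u v a f₂ x)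
      ≤ numSignChanges a b h₀ := step1
    _ = numSignChanges a b χ₁ := step2
    _ ≤ numSignChanges a b χ := step3
    _ = numSignChanges a b fin := step4
    _ = _ := step5
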